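/- Let {l_1,…,l_b} and {m_1,…,m_b} be equal multisets of integers. Suppose moreover that for some c ∈ [b−1], the multisets {l_1+1,…,l_c+1, l_{c+1},…,l_b} and {m_1+1,…,m_c+1, m_{c+1},…,m_b} are equal. Then {l_1,…,l_c} = {m_1,…,m_c} as multisets (and hence also {l_{c+1},…,l_b} = {m_{c+1},…,m_b}). -/

import Mathlib

/-- if two equal multisets `{l_1,…,l_b}` and `{m_1,…,m_b}` remain equal after
adding `1` to the first `c` designated elements of each (`c ∈ [b−1]`), then the designated
sub-multisets `{l_1,…,l_c}` and `{m_1,…,m_c}` agree (and hence so do the complementary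
sub-multisets). -/
theorem stmt13 (b c : ℕ) (hc1 : 1 ≤ c) (hc2 : c < b) (l m : ℕ → ℤ)
    (h1 : (Finset.range b).val.map l = (Finset.range b).val.map m)
    (h2 : (Finset.range b).val.map (fun i => if i < c then l i + 1 else l i) =
          (Finset.range b).val.map (fun i => if i < c then m i + 1 else m i)) :
    (Finset.range c).val.map l = (Finset.range c).val.map m ∧
      (Finset.Ico c b).val.map l = (Finset.Ico c b).val.map m := by
  set L := (Finset.range c).val.map l with hLdef
  set M := (Finset.range c).val.map m with hMdef
  set L' := (Finset.Ico c b).val.map l with hL'def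
  set M' := (Finset.Ico c b).val.map m with hM'def
  have hsplit : (Finset.range b).val = (Finset.range c).val + (Finset.Ico c b).val := by
    have hdisj : Disjoint (Finset.range c) (Finset.Ico c b) := by
      simp only [Finset.disjoint_left, Finset.mem_range, Finset.mem_Ico]
      intro a ha hab
      omega
    have : Finset.range b = (Finset.range c).disjUnion (Finset.Ico c b) hdisj := by
      ext x
      simp [Finset.mem_disjUnion]
      omega
    rw [this]
    rfl
  rw [hsplit, Multiset.map_add, Multiset.map_add] at h1 h2
  have e1 : ∀ (g : ℕ → ℤ), (Finset.range c).val.map (fun i => if i < c then g i + 1 else g i)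
      = ((Finset.range c).val.map g).map (fun x => x + 1) := by
    intro g
    rw [Multiset.map_map]
    apply Multiset.map_congr rfl
    intro x hx
    simp only [Finset.mem_val, Finset.mem_range] at *
    have : x < c := by simpa using hx
    simp [this]
  have e2 : ∀ (g : ℕ → ℤ), (Finset.Ico c b).val.map (fun i => if i < c then g i + 1 else g i)
      = (Finset.Ico c b).val.map g := by
    intro g
    apply Multiset.map_congr rfl
    intro x hx
    have : ¬ x < c := by
      have := Finset.mem_Ico.mp (Finset.mem_val.mp hx)
      omega
    simp [this]
  rw [e1 l, e1 m, e2 l, e2 m] at h2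
  -- counting
  have hinj : Function.Injective (fun x : ℤ => x + 1) := fun a b h => by simpa using h
  have hcnt : ∀ (A : Multiset ℤ) (x : ℤ),
      (A.map (fun x => x + 1)).count x = A.count (x - 1) := by
    intro A x
    have h := Multiset.count_map_eq_count' (fun x : ℤ => x + 1) A hinj (x - 1)
    simpa using h
  have key : ∀ x : ℤ, (L.count x : ℤ) - M.count x = (L.count (x - 1) : ℤ) - M.count (x - 1) := by
    intro x
    have c1 : L.count x + L'.count x = M.count x + M'.count x := by
      rw [← Multiset.count_add, ← Multiset.count_add, h1]
    have c2 : L.count (x - 1) + L'.count x = M.count (x - 1) + M'.count x := by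
      have := congrArg (Multiset.count x) h2
      rwa [Multiset.count_add, Multiset.count_add, hcnt, hcnt] at this
    have c1' : (L.count x : ℤ) + L'.count x = (M.count x : ℤ) + M'.count x := by
      exact_mod_cast congrArg (Nat.cast : ℕ → ℤ) c1
    have c2' : (L.count (x - 1) : ℤ) + L'.count x = (M.count (x - 1) : ℤ) + M'.count x := by
      exact_mod_cast congrArg (Nat.cast : ℕ → ℤ) c2
    linarith
  -- shift: f x = f (x + n)
  have shift : ∀ (n : ℕ) (x : ℤ),
      (L.count x : ℤ) - M.count x = (L.count (x + n) : ℤ) - M.count (x + n) := by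
    intro n
    induction n with
    | zero => intro x; simp
    | succ k ih =>
      intro x
      have := key (x + (k + 1 : ℕ))
      have hx : (x + (k + 1 : ℕ)) - 1 = x + (k : ℕ) := by push_cast; ring
      rw [hx] at this
      rw [ih x]
      exact this.symm
  -- bound
  obtain ⟨N, hN⟩ := Finset.exists_le ((L + M).toFinset)
  have hzero : ∀ x : ℤ, (L.count x : ℤ) - M.count x = 0 := by
    intro x
    have hn : x + ((N - x).toNat + 1 : ℕ) > N := by
      push_cast
      omega
    have hnot : x + ((N - x).toNat + 1 : ℕ) ∉ L + M := by
      intro hmem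
      have := hN _ (Multiset.mem_toFinset.mpr hmem)
      omega
    rw [shift ((N - x).toNat + 1) x]
    simp only [Multiset.mem_add, not_or] at hnot
    rw [Multiset.count_eq_zero_of_notMem hnot.1, Multiset.count_eq_zero_of_notMem hnot.2]
    simp
  have hLM : L = M := by
    ext x
    have := hzero x
    omega
  refine ⟨hLM, ?_⟩
  have h1' : L + L' = M + M' := h1
  rw [hLM] at h1'
  exact add_left_cancel h1'
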